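/- Let p, q, r, γ : ℝ → ℝ be smooth functions with γ′′ − γ = (1/2)(q − r) − p′ on ℝ. Set M = [[p + γ′, −γ],[γ, −(p + γ′)]] (a smooth map ℝ → M₂(ℝ)). Then M′ + [M, A] = [−A, S] holds identically on ℝ, where S = [[p,q],[r,−p]]. Equivalently, the vector field ṗ = −(1/2)(r − q), q̇ = p, ṙ = −p is Hamiltonian with respect to both P₁ = [·, S] (with Hamiltonian differential −A) and P₂ = ∂ₓ + [·, A] (with Hamiltonian differential M). -/

import Mathlib

open Matrix

/-- The constant matrix `A = (1/2)·[[0,1],[1,0]]`. -/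
noncomputable def A : Matrix (Fin 2) (Fin 2) ℝ := (1/2 : ℝ) • !![0, 1; 1, 0]

/-- Entrywise derivative of a matrix-valued function on `ℝ`. -/
noncomputable def mderiv (f : ℝ → Matrix (Fin 2) (Fin 2) ℝ) (x : ℝ) :
    Matrix (Fin 2) (Fin 2) ℝ :=
  Matrix.of fun i j => deriv (fun t => f t i j) x

theorem first_flow_biHamiltonian (p q r γ : ℝ → ℝ)
    (hp : ContDiff ℝ (⊤ : ℕ∞) p) (hq : ContDiff ℝ (⊤ : ℕ∞) q)
    (hr : ContDiff ℝ (⊤ : ℕ∞) r) (hγ : ContDiff ℝ (⊤ : ℕ∞) γ)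
    (hγeq : ∀ x, deriv (deriv γ) x - γ x = (1/2) * (q x - r x) - deriv p x)
    (M : ℝ → Matrix (Fin 2) (Fin 2) ℝ)
    (hM : M = fun x => !![p x + deriv γ x, -γ x; γ x, -(p x + deriv γ x)])
    (S : ℝ → Matrix (Fin 2) (Fin 2) ℝ)
    (hS : S = fun x => !![p x, q x; r x, -p x]) :
    ∀ x, (mderiv M x + (M x * A - A * M x) = (-A) * S x - S x * (-A)) ∧
      ((-A) * S x - S x * (-A) =
        !![-(1/2) * (r x - q x), p x; -(p x), -(-(1/2) * (r x - q x))]) := by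

  subst hM hS
  intro x
  have hpd : Differentiable ℝ p := hp.differentiable (by simp)
  have hγd : Differentiable ℝ γ := hγ.differentiable (by simp)
  have hγ'd : Differentiable ℝ (deriv γ) :=
    ((contDiff_infty_iff_deriv.mp hγ).2).differentiable (by simp)
  have h1 : deriv (fun t => p t + deriv γ t) x = deriv p x + deriv (deriv γ) x :=
    deriv_add (hpd x) (hγ'd x)
  have h2 : deriv (fun t => -γ t) x = -deriv γ x := deriv.neg
  have h3 : deriv (fun t => -(p t + deriv γ t)) x
      = -(deriv p x + deriv (deriv γ) x) := by
    rw [deriv.fun_neg, h1]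
  have h4 : deriv (fun t => -deriv γ t + -p t) x
      = -(deriv (deriv γ) x) + -(deriv p x) := by
    rw [deriv_fun_add ((hγ'd x).fun_neg) ((hpd x).fun_neg), deriv.fun_neg, deriv.fun_neg]
  have key := hγeq x
  constructor
  · ext i j
    fin_cases i <;> fin_cases j <;>
      simp [mderiv, A, Matrix.mul_apply, Fin.sum_univ_two, h1, h2, h3, h4] <;>
      linarith
  · ext i j
    fin_cases i <;> fin_cases j <;>
      simp [A, Matrix.mul_apply, Fin.sum_univ_two] <;> ring
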